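/- Let f : ℝ → ℝ be convex, nondecreasing, and differentiable with f(t) = 0 for all t ≤ 0 and f'(t) ≤ B for all t. Let X_K be an integrable random variable, let K ≥ 1 be an integer, and suppose x̄ satisfies 0 < x̄ ≤ y_max/K and p(K·x̄) + p'(K·x̄)·x̄ = 0, while x satisfies 0 ≤ x ≤ x̄ and p(K·x) + p'(K·x)·x − E[f'(x − X_K)] = 0. Then K·(x̄ − x)·(−p'(0)) ≤ B·P(X_K ≤ x̄). -/

import Mathlib

open MeasureTheory

/-- Tangent line inequality for convex functions. -/
lemma aux_tangent_le {S : Set ℝ} {g : ℝ → ℝ} (hg : ConvexOn ℝ S g) {a b d : ℝ}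
    (ha : a ∈ S) (hb : b ∈ S) (hd : HasDerivAt g d a) : d * (b - a) ≤ g b - g a := by
  rcases lt_trichotomy a b with h | h | h
  · have h1 := hg.le_slope_of_hasDerivAt ha hb h hd
    rw [slope_def_field] at h1
    have hba : 0 < b - a := by linarith
    exact (le_div_iff₀ hba).mp h1
  · simp [h]
  · have h1 := hg.slope_le_of_hasDerivAt hb ha h hd
    rw [slope_def_field] at h1
    have hab : 0 < a - b := by linarith
    have := (div_le_iff₀ hab).mp h1
    nlinarith

theorem generalized_penalty_output_gap_bound
    {Ω : Type*} [MeasurableSpace Ω] (P : Measure Ω) [IsProbabilityMeasure P]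
    (p p' : ℝ → ℝ)
    (hp_anti : StrictAntiOn p (Set.Ici (0 : ℝ)))
    (hp_conc : ConcaveOn ℝ (Set.Ici (0 : ℝ)) p)
    (hp_deriv : ∀ y ∈ Set.Ici (0 : ℝ), HasDerivAt p (p' y) y)
    (hp0 : 0 < p 0) (hp'0 : p' 0 < 0)
    (hp_bot : Filter.Tendsto p Filter.atTop Filter.atBot)
    (ymax : ℝ) (hymax_pos : 0 < ymax) (hymax : p ymax = 0)
    (f f' : ℝ → ℝ) (B : ℝ)
    (hf_conv : ConvexOn ℝ Set.univ f) (hf_mono : Monotone f)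
    (hf_deriv : ∀ t : ℝ, HasDerivAt f (f' t) t)
    (hf_zero : ∀ t : ℝ, t ≤ 0 → f t = 0)
    (hf'_le : ∀ t : ℝ, f' t ≤ B)
    (XK : Ω → ℝ) (hXK : Integrable XK P)
    (K : ℕ) (hK : 1 ≤ K)
    (xb : ℝ) (hxb_pos : 0 < xb) (hxb_le : xb ≤ ymax / K)
    (hxb_FOC : p (K * xb) + p' (K * xb) * xb = 0)
    (x : ℝ) (hx_nonneg : 0 ≤ x) (hx_le : x ≤ xb)
    (hx_FOC : p (K * x) + p' (K * x) * x - (∫ ω, f' (x - XK ω) ∂P) = 0) :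
    K * (xb - x) * (-p' 0) ≤ B * (P {ω | XK ω ≤ xb}).toReal := by
  have hKpos : (0:ℝ) < K := by exact_mod_cast hK
  set a : ℝ := K * x with ha_def
  set b : ℝ := K * xb with hb_def
  have ha0 : (0:ℝ) ≤ a := by positivity
  have hb0 : (0:ℝ) ≤ b := by positivity
  have hab : a ≤ b := by
    apply mul_le_mul_of_nonneg_left hx_le hKpos.le
  have haS : a ∈ Set.Ici (0:ℝ) := ha0
  have hbS : b ∈ Set.Ici (0:ℝ) := hb0
  have h0S : (0:ℝ) ∈ Set.Ici (0:ℝ) := Set.self_mem_Ici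
  -- convexity of -p
  have hq : ConvexOn ℝ (Set.Ici (0:ℝ)) (fun y => -p y) := hp_conc.neg
  have hqd : ∀ y ∈ Set.Ici (0:ℝ), HasDerivAt (fun y => -p y) (-(p' y)) y :=
    fun y hy => (hp_deriv y hy).neg
  -- p' is antitone on Ici 0 (we only need a few instances)
  have hanti : ∀ u ∈ Set.Ici (0:ℝ), ∀ v ∈ Set.Ici (0:ℝ), u ≤ v → p' v ≤ p' u := by
    intro u hu v hv huv
    have h1 := aux_tangent_le hq hu hv (hqd u hu)
    have h2 := aux_tangent_le hq hv hu (hqd v hv)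
    rcases eq_or_lt_of_le huv with h | h
    · rw [h]
    · nlinarith
  have hp'a0 : p' a ≤ p' 0 := hanti 0 h0S a haS ha0
  have hp'b0 : p' b ≤ p' 0 := hanti 0 h0S b hbS hb0
  have hp'ba : p' b ≤ p' a := hanti a haS b hbS hab
  -- lower bound for p a - p b
  have htan : -(p' a) * (b - a) ≤ -p b - -p a := aux_tangent_le hq haS hbS (hqd a haS)
  have hkey : K * (xb - x) * (-p' 0) ≤ (p a + p' a * x) - (p b + p' b * xb) := by
    have hba : K * (xb - x) = b - a := by ring
    have h1 : (-p' 0) * (b - a) ≤ (-p' a) * (b - a) := by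
      apply mul_le_mul_of_nonneg_right _ (by linarith)
      linarith
    have h2 : p' b * xb ≤ p' a * x := by
      have : p' b * xb ≤ p' b * x := by nlinarith
      nlinarith
    nlinarith
  -- the integral equals the FOC gap
  have hint_eq : (∫ ω, f' (x - XK ω) ∂P) = (p a + p' a * x) - (p b + p' b * xb) := by
    linarith
  -- facts about f'
  have hf'mono : Monotone f' := by
    intro u v huv
    have h1 := aux_tangent_le hf_conv (Set.mem_univ u) (Set.mem_univ v) (hf_deriv u)
    have h2 := aux_tangent_le hf_conv (Set.mem_univ v) (Set.mem_univ u) (hf_deriv v)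
    rcases eq_or_lt_of_le huv with h | h
    · rw [h]
    · nlinarith
  have hf'nonneg : ∀ t, 0 ≤ f' t := by
    intro t
    have h1 := aux_tangent_le hf_conv (Set.mem_univ t) (Set.mem_univ (t - 1)) (hf_deriv t)
    have h2 : f (t - 1) ≤ f t := hf_mono (by linarith)
    nlinarith
  have hf'zero : ∀ t : ℝ, t ≤ 0 → f' t = 0 := by
    intro t ht
    have htS : t ∈ Set.Iic (0:ℝ) := ht
    have h1 : HasDerivWithinAt f 0 (Set.Iic 0) t :=
      (hasDerivWithinAt_const t (Set.Iic 0) (0:ℝ)).congr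
        (fun s hs => hf_zero s hs) (hf_zero t ht)
    have h2 : HasDerivWithinAt f (f' t) (Set.Iic 0) t := (hf_deriv t).hasDerivWithinAt
    have hu : UniqueDiffWithinAt ℝ (Set.Iic (0:ℝ)) t := uniqueDiffOn_Iic 0 t htS
    rw [← h2.derivWithin hu, h1.derivWithin hu]
  have hB0 : 0 ≤ B := le_trans (hf'nonneg 0) (hf'_le 0)
  -- measurability and integrability
  have hgmeas : AEStronglyMeasurable (fun ω => f' (x - XK ω)) P :=
    (hf'mono.measurable.comp_aemeasurable
      (aemeasurable_const.sub hXK.aemeasurable)).aestronglyMeasurable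
  have hgint : Integrable (fun ω => f' (x - XK ω)) P := by
    refine Integrable.mono' (integrable_const B) hgmeas (ae_of_all _ fun ω => ?_)
    rw [Real.norm_eq_abs, abs_le]
    exact ⟨by linarith [hf'nonneg (x - XK ω)], hf'_le _⟩
  -- compare to indicator
  set s : Set Ω := {ω | XK ω ≤ xb} with hs_def
  set t : Set Ω := toMeasurable P s with ht_def
  have htmeas : MeasurableSet t := measurableSet_toMeasurable P s
  have hst : s ⊆ t := subset_toMeasurable P s
  have hPts : P t = P s := measure_toMeasurable s
  have hptw : ∀ ω, f' (x - XK ω) ≤ t.indicator (fun _ => B) ω := by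
    intro ω
    by_cases hω : ω ∈ t
    · rw [Set.indicator_of_mem hω]
      exact hf'_le _
    · rw [Set.indicator_of_notMem hω]
      have hωs : ω ∉ s := fun h => hω (hst h)
      have : xb < XK ω := lt_of_not_ge hωs
      rw [hf'zero (x - XK ω) (by linarith)]
  have hind_int : Integrable (t.indicator (fun _ => B)) P :=
    (integrable_const B).indicator htmeas
  have hle : (∫ ω, f' (x - XK ω) ∂P) ≤ ∫ ω, t.indicator (fun _ => B) ω ∂P :=
    integral_mono hgint hind_int hptw
  have hind_eq : (∫ ω, t.indicator (fun _ => B) ω ∂P) = B * (P s).toReal := by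
    rw [integral_indicator_const B htmeas, Measure.real, hPts, smul_eq_mul, mul_comm]
  calc K * (xb - x) * (-p' 0) ≤ (p a + p' a * x) - (p b + p' b * xb) := hkey
    _ = ∫ ω, f' (x - XK ω) ∂P := hint_eq.symm
    _ ≤ ∫ ω, t.indicator (fun _ => B) ω ∂P := hle
    _ = B * (P s).toReal := hind_eq
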